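/- Define the low-upper envelope f^⌣(x) = sup{⟨x−a, a*⟩ + f(a) : (a,a*) ∈ Graph ∂f, f(a) ≤ f(x)}. Then for every f : X → ℝ̄: f^⌣ ≤ f^∪ ≤ f; f^⌣(x) = f(x) for x ∈ D(∂f); and for every x ∈ X, f^⌣(x) ≤ φ_{∂f}(x, 0) + f(x). -/

import Mathlib

open scoped Topology

section Defs

variable {X : Type*} [AddCommGroup X] [Module ℝ X] [TopologicalSpace X]

/-- `p ∈ ∂f(x)`: `f x` is finite and `f y ≥ f x + ⟨y - x, p⟩` for all `y`. -/
def IsSubgrad (f : X → EReal) (x : X) (p : X →L[ℝ] ℝ) : Prop :=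
  f x ≠ ⊤ ∧ f x ≠ ⊥ ∧ ∀ y, f x + (p (y - x) : EReal) ≤ f y

/-- Graph of the convex subdifferential of `f`. -/
def graphSub (f : X → EReal) : Set (X × (X →L[ℝ] ℝ)) :=
  {q | IsSubgrad f q.1 q.2}

/-- Domain `D(∂f)` of the subdifferential. -/
def subdiffDom (f : X → EReal) : Set X := {x | ∃ p, IsSubgrad f x p}

/-- Range `R(∂f)` of the subdifferential. -/
def subdiffRan (f : X → EReal) : Set (X →L[ℝ] ℝ) := {p | ∃ x, IsSubgrad f x p}

/-- Monotone subset of `X × X*`. -/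
def MonotoneSet (S : Set (X × (X →L[ℝ] ℝ))) : Prop :=
  ∀ a ∈ S, ∀ b ∈ S, 0 ≤ a.2 (a.1 - b.1) - b.2 (a.1 - b.1)

/-- Maximal monotone subset of `X × X*` (maximal w.r.t. graph inclusion). -/
def MaxMonotoneSet (S : Set (X × (X →L[ℝ] ℝ))) : Prop :=
  MonotoneSet S ∧ ∀ T, MonotoneSet T → S ⊆ T → T = S

/-- Proper function: never `−∞` and not identically `+∞`. -/
def ProperE {Y : Type*} (f : Y → EReal) : Prop :=
  (∃ x, f x ≠ ⊤) ∧ ∀ x, f x ≠ ⊥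

/-- Convexity of an extended-real-valued function via its epigraph. -/
def ConvexEpi (f : X → EReal) : Prop :=
  Convex ℝ {q : X × ℝ | f q.1 ≤ (q.2 : EReal)}

/-- The lsc convex hull: the greatest lsc convex function majorized by `f`. -/
noncomputable def lscConvHull (f : X → EReal) : X → EReal := fun x =>
  sSup {v | ∃ g : X → EReal, ConvexEpi g ∧ LowerSemicontinuous g ∧ g ≤ f ∧ v = g x}

/-- Convex conjugate w.r.t. the dual system `(X, X*)`. -/
noncomputable def conjE (f : X → EReal) (p : X →L[ℝ] ℝ) : EReal :=
  ⨆ x, ((p x : EReal) - f x)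

/-- Biconjugate `f**`. -/
noncomputable def biconjE (f : X → EReal) (x : X) : EReal :=
  ⨆ p : X →L[ℝ] ℝ, ((p x : EReal) - conjE f p)

/-- Fitzpatrick function of `∂f`. -/
noncomputable def fitzSub (f : X → EReal) (x : X) (p : X →L[ℝ] ℝ) : EReal :=
  ⨆ a, ⨆ s, ⨆ _ : IsSubgrad f a s, ((s (x - a) + p a : ℝ) : EReal)

/-- Upper envelope `f^∪(x) = sup{⟨x−a, a*⟩ + f(a) : (a,a*) ∈ Graph ∂f}`. -/
noncomputable def upperEnv (f : X → EReal) (x : X) : EReal :=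
  ⨆ a, ⨆ s, ⨆ _ : IsSubgrad f a s, ((s (x - a) : EReal) + f a)

end Defs

/-- Low-upper envelope of `f`. -/
noncomputable def lowUpperEnv {X : Type*} [AddCommGroup X] [Module ℝ X] [TopologicalSpace X]
    (f : X → EReal) (x : X) : EReal :=
  ⨆ a, ⨆ s, ⨆ _ : IsSubgrad f a s ∧ f a ≤ f x, ((s (x - a) : EReal) + f a)

theorem lowUpperEnv_props {X : Type*} [AddCommGroup X] [Module ℝ X] [TopologicalSpace X]
    [IsTopologicalAddGroup X] [ContinuousSMul ℝ X] [LocallyConvexSpace ℝ X] [T2Space X]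
    (f : X → EReal) :
    (∀ x, lowUpperEnv f x ≤ upperEnv f x) ∧
      (∀ x, upperEnv f x ≤ f x) ∧
      (∀ x ∈ subdiffDom f, lowUpperEnv f x = f x) ∧
      (∀ x, lowUpperEnv f x ≤ fitzSub f x 0 + f x) := by
  have h1 : ∀ x, lowUpperEnv f x ≤ upperEnv f x := by
    intro x
    refine iSup_le fun a => iSup_le fun s => iSup_le fun h => ?_
    exact le_iSup_of_le a (le_iSup_of_le s (le_iSup_of_le h.1 le_rfl))
  have h2 : ∀ x, upperEnv f x ≤ f x := by
    intro x
    refine iSup_le fun a => iSup_le fun s => iSup_le fun h => ?_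
    calc ((s (x - a) : ℝ) : EReal) + f a = f a + (s (x - a) : ℝ) := add_comm _ _
      _ ≤ f x := h.2.2 x
  refine ⟨h1, h2, ?_, ?_⟩
  · rintro x ⟨p, hp⟩
    refine le_antisymm ((h1 x).trans (h2 x)) ?_
    have : ((p (x - x) : ℝ) : EReal) + f x ≤ lowUpperEnv f x :=
      le_iSup_of_le x (le_iSup_of_le p (le_iSup_of_le ⟨hp, le_rfl⟩ le_rfl))
    simpa using this
  · intro x
    refine iSup_le fun a => iSup_le fun s => iSup_le fun h => ?_
    have hf : ((s (x - a) : ℝ) : EReal) ≤ fitzSub f x 0 := by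
      refine le_iSup_of_le a (le_iSup_of_le s (le_iSup_of_le h.1 ?_))
      simp
    exact add_le_add hf h.2
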